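/- Let l be an odd positive integer and ζ = exp(2πi/l). Then the determinant of the ((l-1)/2) × ((l-1)/2) matrix with (p,q) entry ζ^{pq} - ζ^{-pq} (for 1 ≤ p,q ≤ (l-1)/2) satisfies det² = (-l)^{(l-1)/2}; equivalently det = ±√((-l)^{(l-1)/2}). -/
import Mathlib


/-- Let `l` be an odd positive integer and `ζ = exp(2πi/l)`. The determinant of
the `((l-1)/2) × ((l-1)/2)` matrix with `(p,q)` entry `ζ^{pq} - ζ^{-pq}`
(for `1 ≤ p, q ≤ (l-1)/2`) satisfies `det² = (-l)^{(l-1)/2}`. -/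
theorem stmt7 (l : ℕ) (hl : Odd l) (hl0 : 0 < l)
    (ζ : ℂ) (hζ : ζ = Complex.exp (2 * Real.pi * Complex.I / l))
    (A : Matrix (Fin ((l - 1) / 2)) (Fin ((l - 1) / 2)) ℂ)
    (hA : ∀ p q, A p q =
      ζ ^ ((p.1 + 1) * (q.1 + 1)) - ζ⁻¹ ^ ((p.1 + 1) * (q.1 + 1))) :
    A.det ^ 2 = (-(l : ℂ)) ^ ((l - 1) / 2) := by
  have hm : l = 2 * ((l - 1) / 2) + 1 := by
    obtain ⟨k, hk⟩ := hl; omega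
  have hprim : IsPrimitiveRoot ζ l := by
    rw [hζ]; exact Complex.isPrimitiveRoot_exp l hl0.ne'
  have hζ0 : ζ ≠ 0 := hprim.ne_zero hl0.ne'
  -- key geometric-sum lemma
  have key : ∀ k : ℤ, ¬ ((l : ℤ) ∣ k) →
      (∑ q ∈ Finset.range ((l - 1) / 2), (ζ ^ (((q : ℤ) + 1) * k) + ζ ^ (-(((q : ℤ) + 1) * k)))) = -1 := by
    intro k hk
    obtain ⟨n, hn, hln⟩ : ∃ n, (l - 1) / 2 = n ∧ l = 2 * n + 1 := ⟨_, rfl, hm⟩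
    rw [hn]
    set x : ℂ := ζ ^ k with hxdef
    have hx0 : x ≠ 0 := zpow_ne_zero _ hζ0
    have hx1 : x ≠ 1 := fun h => hk ((hprim.zpow_eq_one_iff_dvd k).mp h)
    have hxl : x ^ l = 1 := by
      rw [hxdef, ← zpow_natCast, ← zpow_mul, mul_comm, zpow_mul, zpow_natCast,
        hprim.pow_eq_one, one_zpow]
    have hsum0 : ∑ q ∈ Finset.range l, x ^ q = 0 := by
      have h := geom_sum_mul x l
      rw [hxl, sub_self] at h
      rcases mul_eq_zero.mp h with h' | h'
      · exact h'
      · exact absurd (sub_eq_zero.mp h') hx1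
    have hsplit : ∑ q ∈ Finset.range l, x ^ q
        = 1 + ((∑ q ∈ Finset.range (n), x ^ (q + 1)) + ∑ q ∈ Finset.range (n), x ^ (1 + n + q)) := by
      have h1 : l = 1 + (n + n) := by omega
      rw [h1, Finset.sum_range_add, Finset.sum_range_add]
      simp [add_assoc, add_comm, add_left_comm]
    have hrefl : ∑ q ∈ Finset.range (n), x ^ (1 + n + q)
        = ∑ q ∈ Finset.range (n), x ^ (-((q : ℤ) + 1)) := by
      rw [← Finset.sum_range_reflect]
      apply Finset.sum_congr rfl
      intro q hq
      rw [Finset.mem_range] at hq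
      have h2 : 1 + n + (n - 1 - q) = l - (q + 1) := by omega
      rw [h2]
      have h3 : (x ^ (l - (q + 1)) : ℂ) = x ^ ((l : ℤ) - ((q : ℤ) + 1)) := by
        rw [← zpow_natCast]
        congr 1
        omega
      rw [h3, zpow_sub₀ hx0, zpow_natCast, hxl, zpow_neg]
      simp [zpow_add₀ hx0]
    have hgoal : ∀ q ∈ Finset.range (n),
        ζ ^ (((q : ℤ) + 1) * k) + ζ ^ (-(((q : ℤ) + 1) * k))
          = x ^ ((q : ℤ) + 1) + x ^ (-((q : ℤ) + 1)) := by
      intro q _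
      rw [hxdef, ← zpow_mul, ← zpow_mul]
      ring_nf
    rw [Finset.sum_congr rfl hgoal, Finset.sum_add_distrib]
    have hnat : ∀ q ∈ Finset.range (n), (x : ℂ) ^ ((q : ℤ) + 1) = x ^ (q + 1) := by
      intro q _
      rw [← zpow_natCast]
      norm_cast
    rw [Finset.sum_congr rfl hnat, ← hrefl]
    rw [hsplit] at hsum0
    linear_combination hsum0
  -- A * A = -l • 1
  have hAA : A * A = (-(l : ℂ)) • (1 : Matrix (Fin ((l - 1) / 2)) (Fin ((l - 1) / 2)) ℂ) := by
    ext p r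
    rw [Matrix.mul_apply, Matrix.smul_apply, Matrix.one_apply, smul_eq_mul]
    have hterm : ∀ q : Fin ((l - 1) / 2), A p q * A q r
        = (ζ ^ (((q : ℤ) + 1) * (((p : ℤ) + 1) + ((r : ℤ) + 1)))
            + ζ ^ (-(((q : ℤ) + 1) * (((p : ℤ) + 1) + ((r : ℤ) + 1)))))
          - (ζ ^ (((q : ℤ) + 1) * (((p : ℤ) + 1) - ((r : ℤ) + 1)))
            + ζ ^ (-(((q : ℤ) + 1) * (((p : ℤ) + 1) - ((r : ℤ) + 1))))) := by
      intro q
      rw [hA, hA]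
      have e1 : (ζ ^ ((p.1 + 1) * (q.1 + 1)) : ℂ) = ζ ^ ((((p : ℤ) + 1) * ((q : ℤ) + 1))) := by
        rw [← zpow_natCast]; norm_cast
      have e2 : (ζ⁻¹ ^ ((p.1 + 1) * (q.1 + 1)) : ℂ) = ζ ^ (-(((p : ℤ) + 1) * ((q : ℤ) + 1))) := by
        rw [inv_pow, ← zpow_natCast, ← zpow_neg]; norm_cast
      have e3 : (ζ ^ ((q.1 + 1) * (r.1 + 1)) : ℂ) = ζ ^ ((((q : ℤ) + 1) * ((r : ℤ) + 1))) := by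
        rw [← zpow_natCast]; norm_cast
      have e4 : (ζ⁻¹ ^ ((q.1 + 1) * (r.1 + 1)) : ℂ) = ζ ^ (-(((q : ℤ) + 1) * ((r : ℤ) + 1))) := by
        rw [inv_pow, ← zpow_natCast, ← zpow_neg]; norm_cast
      rw [e1, e2, e3, e4]
      set a : ℤ := (p : ℤ) + 1
      set b : ℤ := (q : ℤ) + 1
      set c : ℤ := (r : ℤ) + 1
      have f1 : (ζ ^ (a * b) : ℂ) * ζ ^ (b * c) = ζ ^ (b * (a + c)) := by
        rw [← zpow_add₀ hζ0]; ring_nf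
      have f2 : (ζ ^ (a * b) : ℂ) * ζ ^ (-(b * c)) = ζ ^ (b * (a - c)) := by
        rw [← zpow_add₀ hζ0]; ring_nf
      have f3 : (ζ ^ (-(a * b)) : ℂ) * ζ ^ (b * c) = ζ ^ (-(b * (a - c))) := by
        rw [← zpow_add₀ hζ0]; ring_nf
      have f4 : (ζ ^ (-(a * b)) : ℂ) * ζ ^ (-(b * c)) = ζ ^ (-(b * (a + c))) := by
        rw [← zpow_add₀ hζ0]; ring_nf
      calc (ζ ^ (a * b) - ζ ^ (-(a * b))) * (ζ ^ (b * c) - ζ ^ (-(b * c)))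
          = ζ ^ (a * b) * ζ ^ (b * c) + ζ ^ (-(a * b)) * ζ ^ (-(b * c))
            - (ζ ^ (a * b) * ζ ^ (-(b * c)) + ζ ^ (-(a * b)) * ζ ^ (b * c)) := by ring
        _ = _ := by rw [f1, f2, f3, f4]
    rw [Finset.sum_congr rfl (fun q _ => hterm q), Finset.sum_sub_distrib]
    rw [Fin.sum_univ_eq_sum_range
      (fun q => (ζ ^ (((q : ℤ) + 1) * (((p : ℤ) + 1) + ((r : ℤ) + 1)))
        + ζ ^ (-(((q : ℤ) + 1) * (((p : ℤ) + 1) + ((r : ℤ) + 1)))))),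
      Fin.sum_univ_eq_sum_range
      (fun q => (ζ ^ (((q : ℤ) + 1) * (((p : ℤ) + 1) - ((r : ℤ) + 1)))
        + ζ ^ (-(((q : ℤ) + 1) * (((p : ℤ) + 1) - ((r : ℤ) + 1))))))]
    have hk1 : ¬ ((l : ℤ) ∣ ((p : ℤ) + 1) + ((r : ℤ) + 1)) := by
      intro hdvd
      have hp := p.2
      have hr := r.2
      have h1 : (0 : ℤ) < ((p : ℤ) + 1) + ((r : ℤ) + 1) := by positivity
      have h2 : ((p : ℤ) + 1) + ((r : ℤ) + 1) < l := by
        push_cast; omega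
      have := Int.le_of_dvd h1 hdvd
      omega
    rw [key _ hk1]
    by_cases hpr : p = r
    · subst hpr
      rw [if_pos rfl, mul_one]
      have : ∀ q ∈ Finset.range ((l - 1) / 2),
          (ζ ^ (((q : ℤ) + 1) * (((p : ℤ) + 1) - ((p : ℤ) + 1)))
            + ζ ^ (-(((q : ℤ) + 1) * (((p : ℤ) + 1) - ((p : ℤ) + 1))))) = 2 := by
        intro q _
        norm_num
      rw [Finset.sum_congr rfl this, Finset.sum_const, Finset.card_range, nsmul_eq_mul]
      have hlc : ((l : ℂ)) = 2 * ((((l - 1) / 2 : ℕ)) : ℂ) + 1 := by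
        exact_mod_cast congrArg (Nat.cast (R := ℂ)) hm
      rw [hlc]; push_cast; ring
    · rw [if_neg hpr, mul_zero]
      have hk2 : ¬ ((l : ℤ) ∣ ((p : ℤ) + 1) - ((r : ℤ) + 1)) := by
        intro hdvd
        have hp := p.2
        have hr := r.2
        have hne : ((p : ℤ) + 1) - ((r : ℤ) + 1) ≠ 0 := by
          intro h
          apply hpr
          apply Fin.ext
          omega
        have h1 : (0 : ℤ) < |((p : ℤ) + 1) - ((r : ℤ) + 1)| := abs_pos.mpr hne
        have h2 : |((p : ℤ) + 1) - ((r : ℤ) + 1)| < l := by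
          rw [abs_lt]; push_cast; omega
        have h3 := Int.le_of_dvd h1 ((dvd_abs _ _).mpr hdvd)
        omega
      rw [key _ hk2]
      ring
  have hdet := congrArg Matrix.det hAA
  rw [Matrix.det_mul, Matrix.det_smul, Matrix.det_one] at hdet
  simpa [sq, Fintype.card_fin] using hdet
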